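/- arXiv:math/0403415 — 5 statements merged into one kernel-verified Lean document; each statement's English description precedes it below -/
import Mathlib

section
/- Let p be an odd prime and P a finite p-group of rank 1 (i.e., every elementary abelian p-subgroup of P is cyclic). Then P is cyclic. -/
open Subgroup

private lemma pow_key {G : Type*} [Group G] {x y c : G}
    (h : y * x = x * y * c) (hc : ∀ g : G, c * g = g * c) :
    ∀ n : ℕ, (x * y) ^ n = x ^ n * y ^ n * c ^ n.choose 2 := by
  have hC : ∀ g : G, Commute c g := fun g => hc g
  have hkey : ∀ n : ℕ, y ^ n * x = x * y ^ n * c ^ n := by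
    intro n
    induction n with
    | zero => simp
    | succ n ih =>
      calc y ^ (n+1) * x = y * (y ^ n * x) := by rw [pow_succ', mul_assoc]
      _ = y * (x * y ^ n * c ^ n) := by rw [ih]
      _ = (y * x) * (y ^ n * c ^ n) := by group
      _ = (x * y * c) * (y ^ n * c ^ n) := by rw [h]
      _ = x * y * (c * y ^ n) * c ^ n := by group
      _ = x * y * (y ^ n * c) * c ^ n := by rw [hc (y ^ n)]
      _ = x * y ^ (n+1) * c ^ (n+1) := by rw [pow_succ', pow_succ]; group
  intro n
  induction n with
  | zero => simp
  | succ n ih =>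
    calc (x * y) ^ (n+1) = (x * y) ^ n * (x * y) := pow_succ _ _
    _ = x ^ n * y ^ n * (c ^ n.choose 2 * (x * y)) := by rw [ih]; group
    _ = x ^ n * y ^ n * ((x * y) * c ^ n.choose 2) := by rw [((hC (x*y)).pow_left _).eq]
    _ = x ^ n * (y ^ n * x) * (y * c ^ n.choose 2) := by group
    _ = x ^ n * (x * y ^ n * c ^ n) * (y * c ^ n.choose 2) := by rw [hkey n]
    _ = x ^ (n+1) * y ^ n * ((c ^ n * y) * c ^ n.choose 2) := by rw [pow_succ]; group
    _ = x ^ (n+1) * y ^ n * ((y * c ^ n) * c ^ n.choose 2) := by rw [((hC y).pow_left n).eq]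
    _ = x ^ (n+1) * y ^ (n+1) * (c ^ n * c ^ n.choose 2) := by rw [pow_succ]; group
    _ = x ^ (n+1) * y ^ (n+1) * c ^ (n+1).choose 2 := by
        rw [← pow_add, Nat.choose_succ_succ, Nat.choose_one_right, Nat.add_comm]


private lemma cyclic_of_small {p : ℕ} (hp : p.Prime) :
    ∀ n : ℕ, ∀ (G : Type u) [Group G] [Fintype G], Fintype.card G = n →
      (∀ a b : G, a * b = b * a) → IsPGroup p G →
      Nat.card {x : G // x ^ p = 1} ≤ p → IsCyclic G := by
  haveI : Fact p.Prime := ⟨hp⟩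
  intro n
  induction n using Nat.strong_induction_on with | _ n ih => ?_
  intro G _ _ hcard hcomm hG hsmall
  rcases subsingleton_or_nontrivial G with hs | hnt
  · infer_instance
  -- the p-th power homomorphism
  let f : G →* G := MonoidHom.mk' (fun g => g ^ p)
    (fun a b => (Commute.mul_pow (hcomm a b) p))
  have hkercard : Nat.card f.ker = Nat.card {x : G // x ^ p = 1} :=
    Nat.card_congr (Equiv.subtypeEquivRight fun x => by
      simp [f, MonoidHom.mem_ker])
  have hdvd : p ∣ Nat.card G := by
    obtain ⟨k, hk⟩ := IsPGroup.iff_card.mp hG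
    rw [hk]
    refine dvd_pow_self p ?_
    rintro rfl
    rw [pow_zero] at hk
    exact (Finite.one_lt_card_iff_nontrivial.mpr hnt).ne' hk
  obtain ⟨x₀, hx₀⟩ := exists_prime_orderOf_dvd_card' (G := G) p hdvd
  -- kernel is nontrivial
  have hker_nt : 1 < Nat.card f.ker := by
    rw [Finite.one_lt_card_iff_nontrivial]
    refine ⟨⟨⟨x₀, ?_⟩, 1, ?_⟩⟩
    · simp [f, MonoidHom.mem_ker, ← hx₀, pow_orderOf_eq_one]
    · simp only [ne_eq, Subgroup.mk_eq_one]
      intro hx1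
      rw [hx1, orderOf_one] at hx₀
      exact hp.one_lt.ne hx₀
  -- first isomorphism counting
  have hiso : Nat.card G = Nat.card f.range * Nat.card f.ker := by
    rw [Subgroup.card_eq_card_quotient_mul_card_subgroup f.ker]
    congr 1
    exact Nat.card_congr (QuotientGroup.quotientKerEquivRange f).toEquiv
  letI : Fintype f.range := Fintype.ofFinite _
  have hrange_lt : Fintype.card f.range < n := by
    rw [← hcard, ← Nat.card_eq_fintype_card, ← Nat.card_eq_fintype_card, hiso]
    have hpos : 0 < Nat.card f.range := Nat.card_pos
    calc Nat.card f.range = Nat.card f.range * 1 := (mul_one _).symm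
    _ < Nat.card f.range * Nat.card f.ker := by
        exact Nat.mul_lt_mul_of_le_of_lt (le_refl _) hker_nt hpos
  -- the range is cyclic by induction
  have hrange_cyclic : IsCyclic f.range := by
    refine ih _ hrange_lt f.range rfl (fun a b => Subtype.ext ?_) (hG.to_subgroup f.range) ?_
    · exact hcomm a b
    · refine le_trans (Nat.card_le_card_of_injective
        (fun y => (⟨(y : G), by rw [← Subgroup.coe_pow, y.2]; rfl⟩ :
          {x : G // x ^ p = 1})) ?_) hsmall
      intro a b hab
      simp only [Subtype.mk.injEq] at hab
      exact Subtype.ext (Subtype.ext hab)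
  -- get a generator of the range
  obtain ⟨g, hg⟩ := hrange_cyclic.exists_generator
  have hord : orderOf (g : G) = Nat.card f.range := by
    rw [orderOf_submonoid, orderOf_eq_card_of_forall_mem_zpowers hg]
  obtain ⟨x, hx⟩ : ∃ x : G, x ^ p = (g : G) := by
    obtain ⟨x, hx⟩ := g.2
    exact ⟨x, hx⟩
  rcases eq_or_ne (orderOf x) 1 with h1 | h1
  · -- x = 1, so g = 1, range is trivial, card G ≤ p, so G cyclic of prime order
    rw [orderOf_eq_one_iff] at h1
    have hcp : Nat.card G = p := by
      have hg1 : (g : G) = 1 := by rw [← hx, h1, one_pow]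
      have h2 : orderOf (g : G) = 1 := by rw [hg1, orderOf_one]
      have hr1 : Nat.card f.range = 1 := by rw [← hord, h2]
      have hle : Nat.card G ≤ p := by rw [hiso, hr1, one_mul, hkercard]; exact hsmall
      exact Nat.le_antisymm hle (Nat.le_of_dvd Nat.card_pos hdvd)
    exact isCyclic_of_prime_card hcp
  · -- p divides orderOf x
    have hpx : p ∣ orderOf x := by
      obtain ⟨k, hk⟩ := hG x
      have hdk : orderOf x ∣ p ^ k := orderOf_dvd_of_pow_eq_one hk
      obtain ⟨j, hj, hd⟩ := (Nat.dvd_prime_pow hp).mp hdk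
      rw [hd]
      refine dvd_pow_self p ?_
      rintro rfl
      rw [pow_zero] at hd
      exact h1 hd
    have hordx : orderOf x = p * Nat.card f.range := by
      have h2 := orderOf_pow (n := p) x
      rw [hx, hord, Nat.gcd_comm] at h2
      rw [Nat.gcd_eq_left hpx] at h2
      obtain ⟨m, hm⟩ := hpx
      rw [hm] at h2 ⊢
      rw [Nat.mul_div_cancel_left m hp.pos] at h2
      rw [h2]
    have hle : Nat.card G ≤ p * Nat.card f.range := by
      rw [hiso, mul_comm]
      exact Nat.mul_le_mul (hkercard ▸ hsmall) le_rfl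
    have heq : orderOf x = Nat.card G :=
      le_antisymm (Nat.card_eq_fintype_card (α := G) ▸ orderOf_le_card_univ) (hordx ▸ hle)
    exact isCyclic_of_orderOf_eq_card x heq

private lemma lemB {p : ℕ} (hp : p.Prime) (hodd : Odd p) :
    ∀ n : ℕ, ∀ (P : Type u) [Group P] [Fintype P], Fintype.card P = n →
      IsPGroup p P → ¬ IsCyclic P →
      ∃ E : Subgroup P, Nat.card E = p ^ 2 ∧ ∀ x ∈ E, x ^ p = 1 := by
  haveI : Fact p.Prime := ⟨hp⟩
  intro n
  induction n using Nat.strong_induction_on with | _ n ih => ?_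
  intro P _ _ hcard hP hnc
  rcases subsingleton_or_nontrivial P with hs | hnt
  · exact absurd isCyclic_of_subsingleton hnc
  -- a central element of order p
  haveI : Nontrivial (center P) := hP.center_nontrivial
  have hZ : IsPGroup p (center P) := hP.to_subgroup (center P)
  have hdvdZ : p ∣ Nat.card (center P) := by
    obtain ⟨k, hk⟩ := IsPGroup.iff_card.mp hZ
    rw [hk]
    refine dvd_pow_self p ?_
    rintro rfl
    rw [pow_zero] at hk
    exact (Finite.one_lt_card_iff_nontrivial.mpr ‹_›).ne' hk
  obtain ⟨g, hg⟩ := exists_prime_orderOf_dvd_card' (G := center P) p hdvdZ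
  set z : P := (g : P) with hzdef
  have hzc : z ∈ center P := g.2
  have hordz : orderOf z = p := by
    rw [← hg]
    exact orderOf_injective (center P).subtype (center P).subtype_injective g
  set N : Subgroup P := zpowers z with hNdef
  have hNcard : Nat.card N = p := by rw [hNdef, Nat.card_zpowers, hordz]
  have hNle : N ≤ center P := zpowers_le.mpr hzc
  haveI hNnorm : N.Normal := by
    constructor
    intro a ha b
    have : b * a = a * b := ((Subgroup.mem_center_iff.mp (hNle ha)) b)
    rw [this, mul_assoc, mul_inv_cancel, mul_one]
    exact ha
  set Q := P ⧸ N with hQdef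
  letI : Fintype Q := Fintype.ofFinite _
  have hQ : IsPGroup p Q := hP.to_quotient N
  have hcards : Nat.card P = Nat.card Q * Nat.card N :=
    Subgroup.card_eq_card_quotient_mul_card_subgroup N
  have hQlt : Fintype.card Q < n := by
    rw [← hcard, ← Nat.card_eq_fintype_card, ← Nat.card_eq_fintype_card, hcards, hNcard]
    have : 0 < Nat.card Q := Nat.card_pos
    calc Nat.card Q = Nat.card Q * 1 := (mul_one _).symm
    _ < Nat.card Q * p := Nat.mul_lt_mul_of_le_of_lt (le_refl _) hp.one_lt this
  by_cases hQc : IsCyclic Q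
  · -- P is abelian
    have hcomm : ∀ a b : P, a * b = b * a := by
      refine commutative_of_cyclic_center_quotient (QuotientGroup.mk' N) ?_
      rw [QuotientGroup.ker_mk']
      exact hNle
    have hbig : ¬ (Nat.card {x : P // x ^ p = 1} ≤ p) := fun hsm =>
      hnc (cyclic_of_small hp n P hcard hcomm hP hsm)
    push_neg at hbig
    -- Ω as a subgroup
    let Ω : Subgroup P :=
      { carrier := {x : P | x ^ p = 1}
        one_mem' := one_pow p
        mul_mem' := fun {a b} ha hb => by
          have : (a * b) ^ p = a ^ p * b ^ p := Commute.mul_pow (hcomm a b) p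
          simp only [Set.mem_setOf_eq] at *
          rw [this, ha, hb, one_mul]
        inv_mem' := fun {a} ha => by
          simp only [Set.mem_setOf_eq] at *
          rw [inv_pow, ha, inv_one] }
    have hΩcard : Nat.card Ω = Nat.card {x : P // x ^ p = 1} :=
      Nat.card_congr (Equiv.subtypeEquivRight fun x => Iff.rfl)
    have hΩbig : p ^ 2 ≤ Nat.card Ω := by
      obtain ⟨k, hk⟩ := IsPGroup.iff_card.mp (hP.to_subgroup Ω)
      rw [hk]
      rw [hΩcard] at hk
      have hk2 : 2 ≤ k := by
        by_contra hlt
        push_neg at hlt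
        interval_cases k <;> simp_all <;> omega
      exact Nat.pow_le_pow_right hp.pos hk2
    obtain ⟨E, hEle, hEcard⟩ :=
      Sylow.exists_subgroup_le_card_pow_prime_of_le_card hp hP hΩbig
    exact ⟨E, hEcard, fun x hx => hEle hx⟩
  · -- quotient not cyclic: use induction
    obtain ⟨Ebar, hEbarcard, hEbarexp⟩ := ih _ hQlt Q rfl hQ hQc
    set π := QuotientGroup.mk' N with hπdef
    set H : Subgroup P := Ebar.comap π with hHdef
    have hNH : N ≤ H := fun x hx => by
      have : π x = 1 := by rwa [← QuotientGroup.ker_mk' N, MonoidHom.mem_ker] at hx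
      show π x ∈ Ebar
      rw [this]; exact one_mem _
    have hEbarcomm := IsPGroup.commutative_of_card_eq_prime_sq hEbarcard
    -- commutators of elements of H lie in N and are central
    have hcommutator : ∀ x y : P, x ∈ H → y ∈ H → (x * y)⁻¹ * (y * x) ∈ N := by
      intro x y hx hy
      rw [← QuotientGroup.ker_mk' N, MonoidHom.mem_ker]
      have := hEbarcomm ⟨π x, hx⟩ ⟨π y, hy⟩
      have hc : π x * π y = π y * π x := congrArg Subtype.val this
      simp only [map_mul, map_inv, mul_inv_rev]
      rw [← hc]
      rw [hπdef]
      group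
    -- the p-th power map on H is a homomorphism into N
    have hNpow : ∀ w : P, w ∈ N → w ^ p = 1 := by
      intro w hw
      have : (⟨w, hw⟩ : N) ^ p = 1 := by rw [← hNcard, pow_card_eq_one']
      simpa [Subtype.ext_iff] using this
    have hmul : ∀ a b : ↥H, ((a : P) * b) ^ p = (a : P) ^ p * (b : P) ^ p := by
      intro a b
      set c : P := ((a : P) * b)⁻¹ * ((b : P) * a) with hcdef
      have hcN : c ∈ N := hcommutator _ _ a.2 b.2
      have hcc : ∀ g : P, c * g = g * c := fun g =>
        ((Subgroup.mem_center_iff.mp (hNle hcN)) g).symm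
      have hyx : (b : P) * a = (a : P) * b * c := by rw [hcdef]; group
      have := pow_key hyx hcc p
      rw [this]
      obtain ⟨m, hm⟩ := hodd
      have hchoose : p.choose 2 = p * m := by
        rw [Nat.choose_two_right]
        have h21 : p - 1 = 2 * m := by omega
        rw [h21]
        have h22 : p * (2 * m) = p * m * 2 := by ring
        rw [h22, Nat.mul_div_cancel _ two_pos]
      rw [hchoose, pow_mul, hNpow c hcN, one_pow, mul_one]
    let φ : ↥H →* P := MonoidHom.mk' (fun a => (a : P) ^ p) (fun a b => by
      rw [← hmul a b]; rfl)
    have hrangeN : φ.range ≤ N := by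
      rintro - ⟨a, rfl⟩
      show (a : P) ^ p ∈ N
      rw [← QuotientGroup.ker_mk' N, MonoidHom.mem_ker, map_pow]
      have : π (a : P) ∈ Ebar := a.2
      exact hEbarexp _ this
    -- card H = p^3
    have hHcard : Nat.card H = p ^ 3 := by
      set ρ : ↥H →* Q := π.comp H.subtype with hρdef
      have h1 : Nat.card ↥H = Nat.card ρ.range * Nat.card ρ.ker := by
        rw [Subgroup.card_eq_card_quotient_mul_card_subgroup ρ.ker]
        congr 1
        exact Nat.card_congr (QuotientGroup.quotientKerEquivRange ρ).toEquiv
      have hrange : ρ.range = Ebar := by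
        rw [hρdef, MonoidHom.range_comp, Subgroup.range_subtype, hHdef]
        exact Subgroup.map_comap_eq_self_of_surjective
          (QuotientGroup.mk'_surjective N) Ebar
      have hker : ρ.ker = N.subgroupOf H := by
        ext x
        simp only [MonoidHom.mem_ker, Subgroup.mem_subgroupOf, MonoidHom.comp_apply,
          Subgroup.coe_subtype]
        show ((x : P) : P ⧸ N) = 1 ↔ (x : P) ∈ N
        exact QuotientGroup.eq_one_iff _
      have hkercard : Nat.card ρ.ker = p := by
        rw [hker, ← hNcard]
        exact Nat.card_congr (Subgroup.subgroupOfEquivOfLe hNH).toEquiv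
      rw [h1, hkercard, hrange, hEbarcard]
      ring
    -- kernel of φ is large
    have hkerφ : p ^ 2 ≤ Nat.card φ.ker := by
      have h1 : Nat.card ↥H = Nat.card φ.range * Nat.card φ.ker := by
        rw [Subgroup.card_eq_card_quotient_mul_card_subgroup φ.ker]
        congr 1
        exact Nat.card_congr (QuotientGroup.quotientKerEquivRange φ).toEquiv
      have h2 : Nat.card φ.range ≤ p := hNcard ▸ Subgroup.card_le_of_le hrangeN
      have h3 : p ^ 3 ≤ p * Nat.card φ.ker := by
        rw [← hHcard, h1]
        exact Nat.mul_le_mul h2 (le_refl _)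
      have : p * p ^ 2 ≤ p * Nat.card φ.ker := by
        calc p * p ^ 2 = p ^ 3 := by ring
        _ ≤ p * Nat.card φ.ker := h3
      exact Nat.le_of_mul_le_mul_left this hp.pos
    -- push the kernel into P
    set K : Subgroup P := φ.ker.map H.subtype with hKdef
    have hKcard : Nat.card K = Nat.card φ.ker :=
      (Nat.card_congr (Subgroup.equivMapOfInjective φ.ker H.subtype
        H.subtype_injective).toEquiv).symm
    have hKexp : ∀ x ∈ K, x ^ p = 1 := by
      rintro - ⟨y, hy, rfl⟩
      have : φ y = 1 := hy
      simpa [φ] using this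
    obtain ⟨E, hEle, hEcard⟩ :=
      Sylow.exists_subgroup_le_card_pow_prime_of_le_card hp hP
        (H := K) (hKcard ▸ hkerφ)
    exact ⟨E, hEcard, fun x hx => hKexp x (hEle hx)⟩


/-- A finite `p`-group, `p` an odd prime, in which every elementary abelian
`p`-subgroup is cyclic (rank 1), is cyclic. -/
theorem stmt4 {P : Type*} [Group P] [Fintype P] (p : ℕ) (hp : p.Prime) (hodd : Odd p)
    (hP : IsPGroup p P)
    (h : ∀ E : Subgroup P, (∀ x ∈ E, x ^ p = 1) → IsCyclic E) :
    IsCyclic P := by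
  by_contra hnc
  obtain ⟨E, hEcard, hEexp⟩ := lemB hp hodd (Fintype.card P) P rfl hP hnc
  haveI := h E hEexp
  obtain ⟨g, hg⟩ := IsCyclic.exists_generator (α := E)
  have hord : orderOf g = Nat.card E := orderOf_eq_card_of_forall_mem_zpowers hg
  have hgp : g ^ p = 1 := by
    have h1 : (g : P) ^ p = 1 := hEexp _ g.2
    exact Subtype.ext (by simpa using h1)
  have hdvd : orderOf g ∣ p := orderOf_dvd_of_pow_eq_one hgp
  rw [hord, hEcard] at hdvd
  have hle : p ^ 2 ≤ p := Nat.le_of_dvd hp.pos hdvd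
  have : p ^ 2 > p := by
    have := hp.one_lt
    calc p = p * 1 := (mul_one p).symm
    _ < p * p := by exact Nat.mul_lt_mul_of_le_of_lt (le_refl p) this hp.pos
    _ = p ^ 2 := (sq p).symm
  omega
end

section
/- Let G be a finite group, H, K ≤ G subgroups, and let σ₁, …, σ_r be representatives of the K-H double cosets in G. Let U be a set with a free G-action. Then the map from the disjoint union over i of U/L_i (where L_i = K ∩ σ_i H σ_i⁻¹) to the fiber product (U/K) ×_{U/G} (U/H), sending the class of u in U/L_i to (class of u in U/K, class of σ_i⁻¹·u in U/H), is a bijection. -/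
private lemma mkG_out_eq {G U : Type*} [Group G] [MulAction G U] (K : Subgroup G) (u : U) :
    Quotient.mk (MulAction.orbitRel G U) ((Quotient.mk (MulAction.orbitRel K U) u).out) =
      Quotient.mk (MulAction.orbitRel G U) u := by
  obtain ⟨k, hk⟩ := Quotient.exact ((Quotient.mk (MulAction.orbitRel K U) u).out_eq)
  exact Quotient.sound ⟨↑k, hk⟩

private def myTarget {G U : Type*} [Group G] [MulAction G U] (K H : Subgroup G) (s : G)
    (u : U) :
    {z : Quotient (MulAction.orbitRel K U) × Quotient (MulAction.orbitRel H U) //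
        (Quotient.mk (MulAction.orbitRel G U) z.1.out : Quotient (MulAction.orbitRel G U)) =
          Quotient.mk (MulAction.orbitRel G U) z.2.out} :=
  ⟨(Quotient.mk _ u, Quotient.mk _ (s⁻¹ • u)), by
    rw [mkG_out_eq, mkG_out_eq]
    exact Quotient.sound ⟨s, by simp⟩⟩


/-- Double coset decomposition of the pull-back: if a finite group `G` acts freely on
`U`, `K, H ≤ G`, and `σ₁,…,σ_r` represent the `K`-`H` double cosets, then the map
`⨆ᵢ U/Lᵢ → (U/K) ×_{U/G} (U/H)` (with `Lᵢ = K ∩ σᵢHσᵢ⁻¹`) sending the class of `u`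
in `U/Lᵢ` to `(class of u in U/K, class of σᵢ⁻¹·u in U/H)` is a bijection. -/
theorem stmt6 {G U : Type*} [Group G] [Fintype G] [MulAction G U]
    (hfree : ∀ (g : G) (u : U), g • u = u → g = 1)
    (K H : Subgroup G) (r : ℕ) (σ : Fin r → G)
    (hdc : ∀ g : G, ∃! i : Fin r, ∃ x ∈ K, ∃ y ∈ H, g = x * σ i * y) :
    ∃ f : (Σ i : Fin r,
        Quotient (MulAction.orbitRel
          (K ⊓ Subgroup.map (MulAut.conj (σ i)).toMonoidHom H : Subgroup G) U)) →
      {z : Quotient (MulAction.orbitRel K U) × Quotient (MulAction.orbitRel H U) //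
        (Quotient.mk (MulAction.orbitRel G U) z.1.out : Quotient (MulAction.orbitRel G U)) =
          Quotient.mk (MulAction.orbitRel G U) z.2.out},
      Function.Bijective f ∧
      ∀ (i : Fin r) (u : U),
        (f ⟨i, Quotient.mk _ u⟩).1.1 = Quotient.mk _ u ∧
        (f ⟨i, Quotient.mk _ u⟩).1.2 = Quotient.mk _ ((σ i)⁻¹ • u) := by
  classical
  have wd : ∀ (i : Fin r) (a b : U),
      (MulAction.orbitRel
        (K ⊓ Subgroup.map (MulAut.conj (σ i)).toMonoidHom H : Subgroup G) U).r a b →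
      myTarget K H (σ i) a = myTarget K H (σ i) b := by
    intro i a b hab
    obtain ⟨l, hl⟩ := hab
    obtain ⟨hlK, h, hhH, hconj⟩ := l.2
    refine Subtype.ext (Prod.ext ?_ ?_)
    · exact Quotient.sound ⟨⟨↑l, hlK⟩, hl⟩
    · refine Quotient.sound ⟨⟨h, hhH⟩, ?_⟩
      show h • ((σ i)⁻¹ • b) = (σ i)⁻¹ • a
      have hle : (↑l : G) = σ i * h * (σ i)⁻¹ := by
        rw [← hconj]; rfl
      have hl' : (↑l : G) • b = a := hl
      rw [← hl', hle, smul_smul, smul_smul]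
      congr 1
      group
  refine ⟨fun p => Quotient.lift (myTarget K H (σ p.1)) (wd p.1) p.2, ⟨?_, ?_⟩,
    fun i u => ⟨rfl, rfl⟩⟩
  · -- injective
    rintro ⟨i, x⟩ ⟨j, y⟩ hxy
    obtain ⟨u, rfl⟩ := Quotient.exists_rep x
    obtain ⟨v, rfl⟩ := Quotient.exists_rep y
    have h1 : (Quotient.mk (MulAction.orbitRel K U) u) = Quotient.mk _ v :=
      congrArg (fun z : {z : _ × _ // _} => z.1.1) hxy
    have h2 : (Quotient.mk (MulAction.orbitRel H U) ((σ i)⁻¹ • u)) =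
        Quotient.mk _ ((σ j)⁻¹ • v) :=
      congrArg (fun z : {z : _ × _ // _} => z.1.2) hxy
    obtain ⟨k, hk⟩ := Quotient.exact h1
    obtain ⟨h, hh⟩ := Quotient.exact h2
    have hk' : (↑k : G) • v = u := hk
    have hh' : (↑h : G) • ((σ j)⁻¹ • v) = (σ i)⁻¹ • u := hh
    have hfix : ((↑k : G)⁻¹ * (σ i * ↑h * (σ j)⁻¹)) • v = v := by
      have h3 : (σ i * ↑h * (σ j)⁻¹) • v = u := by
        rw [mul_smul, mul_smul, hh', smul_smul]
        simp
      rw [mul_smul, h3, ← hk', smul_smul]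
      simp
    have hkey : (↑k : G) = σ i * ↑h * (σ j)⁻¹ :=
      inv_mul_eq_one.mp (hfree _ _ hfix)
    have hij : j = i := by
      refine (hdc (σ i)).unique ?_ ?_
      · exact ⟨↑k, k.2, (↑h)⁻¹, inv_mem h.2, by rw [hkey]; group⟩
      · exact ⟨1, one_mem _, 1, one_mem _, by group⟩
    subst hij
    refine congrArg (Sigma.mk j) ?_
    refine Quotient.sound ⟨⟨↑k, k.2, ⟨↑h, h.2, ?_⟩⟩, hk'⟩
    show σ j * ↑h * (σ j)⁻¹ = ↑k
    rw [hkey]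
  · -- surjective
    rintro ⟨⟨x, y⟩, hz⟩
    obtain ⟨g, hg⟩ := Quotient.exact hz
    obtain ⟨i, ⟨k, hkK, h, hhH, hgeq⟩, -⟩ := hdc g
    refine ⟨⟨i, Quotient.mk _ (k⁻¹ • x.out)⟩, ?_⟩
    refine Subtype.ext (Prod.ext ?_ ?_)
    · show Quotient.mk _ (k⁻¹ • x.out) = x
      conv_rhs => rw [← x.out_eq]
      exact Quotient.sound ⟨⟨k⁻¹, inv_mem hkK⟩, rfl⟩
    · show Quotient.mk _ ((σ i)⁻¹ • (k⁻¹ • x.out)) = y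
      conv_rhs => rw [← y.out_eq]
      refine Quotient.sound ⟨⟨h, hhH⟩, ?_⟩
      show h • y.out = (σ i)⁻¹ • (k⁻¹ • x.out)
      have hg' : g • y.out = x.out := hg
      rw [← hg', hgeq, smul_smul, smul_smul]
      congr 1
      group
end

section
/- For any n and any prime p, a Sylow p-subgroup of the symmetric group S_n is isomorphic to a direct product of iterated wreath products of copies of ℤ/p (equivalently, it embeds in a direct product of groups of the form S_p ≀ S_p ≀ ⋯ ≀ S_p). -/
/-- The action of a permutation of `ι` on `ι → M` by permuting coordinates. -/
def permAut (ι M : Type*) [Group M] : Equiv.Perm ι →* MulAut (ι → M) where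
  toFun σ := MulEquiv.arrowCongr σ (MulEquiv.refl M)
  map_one' := by ext; rfl
  map_mul' := by intro a b; ext; rfl

/-- `ℤ/p` acting on itself by translation, as permutations. -/
def shiftHom (p : ℕ) : Multiplicative (ZMod p) →* Equiv.Perm (ZMod p) where
  toFun c := Equiv.addLeft c.toAdd
  map_one' := by ext x; simp
  map_mul' := by intro a b; ext x; simp [add_assoc]

/-- The iterated wreath product `ℤ/p ≀ ⋯ ≀ ℤ/p` (`k` times), with its group
structure: `IWaux p 0` is trivial and
`IWaux p (k+1) = (IWaux p k)^p ⋊ ℤ/p`, the cyclic group permuting the factors. -/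
def IWaux (p : ℕ) : ℕ → (T : Type) × Group T :=
  fun k => Nat.rec ⟨PUnit, inferInstance⟩
    (fun _ ih =>
      letI : Group ih.1 := ih.2
      ⟨(ZMod p → ih.1) ⋊[(permAut (ZMod p) ih.1).comp (shiftHom p)]
          Multiplicative (ZMod p), inferInstance⟩) k

/-- The `k`-fold iterated wreath product of `ℤ/p`. -/
def IW (p k : ℕ) : Type := (IWaux p k).1

instance (p k : ℕ) : Group (IW p k) := (IWaux p k).2

open Equiv

/-- the action map for the wreath step -/
def iwphi (p k : ℕ) : Multiplicative (ZMod p) →* MulAut (ZMod p → IW p k) :=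
  (permAut (ZMod p) (IW p k)).comp (shiftHom p)

/-- `IW p (k+1)` is (definitionally) a semidirect product. -/
def iwSucc (p k : ℕ) :
    IW p (k + 1) ≃* (ZMod p → IW p k) ⋊[iwphi p k] Multiplicative (ZMod p) :=
  MulEquiv.refl _

/-- carrier types: `Vt p k` has cardinality `p ^ k` -/
def Vt (p : ℕ) : ℕ → Type
  | 0 => PUnit
  | (k+1) => ZMod p × Vt p k

def vtSucc (p k : ℕ) : Vt p (k + 1) ≃ ZMod p × Vt p k := Equiv.refl _

def vtFintype (p : ℕ) [NeZero p] : ∀ k, Fintype (Vt p k)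
  | 0 => inferInstanceAs (Fintype PUnit)
  | (k+1) => letI := vtFintype p k; inferInstanceAs (Fintype (ZMod p × Vt p k))

instance (p k : ℕ) [NeZero p] : Fintype (Vt p k) := vtFintype p k

def vtNonempty (p : ℕ) : ∀ k, Nonempty (Vt p k)
  | 0 => ⟨PUnit.unit⟩
  | (k+1) => letI := vtNonempty p k; inferInstanceAs (Nonempty (ZMod p × Vt p k))

instance (p k : ℕ) : Nonempty (Vt p k) := vtNonempty p k

lemma card_vt (p : ℕ) [NeZero p] : ∀ k, Fintype.card (Vt p k) = p ^ k
  | 0 => Fintype.card_punit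
  | (k+1) => by
      have h : Fintype.card (Vt p (k+1)) = Fintype.card (ZMod p × Vt p k) :=
        Fintype.card_congr (vtSucc p k)
      rw [h, Fintype.card_prod, ZMod.card, card_vt p k, pow_succ, mul_comm]

/-- the base group of the wreath product acting coordinatewise -/
def baseHom {M : Type*} [Group M] {V : Type*} (p : ℕ) (r : M →* Equiv.Perm V) :
    (ZMod p → M) →* Equiv.Perm (ZMod p × V) where
  toFun v := Equiv.prodCongrRight fun a => r (v a)
  map_one' := by ext ⟨a, b⟩ <;> simp
  map_mul' v w := by ext ⟨a, b⟩ <;> simp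

/-- the top `ℤ/p` shifting the first coordinate -/
def topHom (p : ℕ) (V : Type*) : Multiplicative (ZMod p) →* Equiv.Perm (ZMod p × V) where
  toFun c := Equiv.prodCongr (Equiv.addLeft c.toAdd) (Equiv.refl V)
  map_one' := by ext ⟨a, b⟩ <;> simp
  map_mul' c d := by ext ⟨a, b⟩ <;> simp [add_assoc]

lemma baseHom_apply {M : Type*} [Group M] {V : Type*} (p : ℕ) (r : M →* Equiv.Perm V)
    (v : ZMod p → M) (a : ZMod p) (b : V) :
    baseHom p r v (a, b) = (a, r (v a) b) := rfl

lemma topHom_apply (p : ℕ) (V : Type*) (c : Multiplicative (ZMod p)) (a : ZMod p) (b : V) :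
    topHom p V c (a, b) = (c.toAdd + a, b) := rfl

lemma compat {M : Type*} [Group M] {V : Type*} (p : ℕ) (r : M →* Equiv.Perm V)
    (g : Multiplicative (ZMod p)) :
    (baseHom p r).comp (((permAut (ZMod p) M).comp (shiftHom p)) g).toMonoidHom =
      (MulAut.conj (topHom p V g)).toMonoidHom.comp (baseHom p r) := by
  refine MonoidHom.ext fun v => Equiv.ext fun x => ?_
  obtain ⟨a, b⟩ := x
  show baseHom p r (((permAut (ZMod p) M) (shiftHom p g)) v) (a, b)
      = (topHom p V g * baseHom p r v * (topHom p V g)⁻¹) (a, b)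
  have h1 : (topHom p V g)⁻¹ (a, b) = (-g.toAdd + a, b) := by
    have : topHom p V g (-g.toAdd + a, b) = (a, b) := by
      rw [topHom_apply]; simp
    rw [← this]; simp
  have h2 : ∀ a : ZMod p, (((permAut (ZMod p) M) (shiftHom p g)) v) a = v (-g.toAdd + a) :=
    fun a => rfl
  rw [Equiv.Perm.mul_apply, Equiv.Perm.mul_apply, h1, baseHom_apply, baseHom_apply,
    topHom_apply, h2]
  simp

/-- a bundled `Perm`-congruence monoid hom along an equiv -/
def permCongrHom {α β : Type*} (e : α ≃ β) : Equiv.Perm α →* Equiv.Perm β where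
  toFun σ := e.permCongr σ
  map_one' := by ext x; simp
  map_mul' σ τ := by ext x; simp

lemma permCongrHom_injective {α β : Type*} (e : α ≃ β) :
    Function.Injective (_root_.permCongrHom e) := (e.permCongr).injective

/-- the faithful representation of `IW p k` on `Vt p k` -/
def rho (p : ℕ) : ∀ k, IW p k →* Equiv.Perm (Vt p k)
  | 0 => 1
  | (k+1) =>
      ((_root_.permCongrHom (vtSucc p k).symm).comp
        (SemidirectProduct.lift (baseHom p (rho p k)) (topHom p (Vt p k))
          (compat p (rho p k)))).comp (iwSucc p k).toMonoidHom

lemma permCongr_symm_cancel {α β : Type*} (e : α ≃ β) (σ : Equiv.Perm β) :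
    _root_.permCongrHom e (_root_.permCongrHom e.symm σ) = σ :=
  Equiv.ext fun x => by simp [_root_.permCongrHom]

lemma rho_injective (p : ℕ) [NeZero p] : ∀ k, Function.Injective (rho p k)
  | 0 => fun a b _ => by
      have : Subsingleton (IW p 0) := inferInstanceAs (Subsingleton PUnit)
      exact Subsingleton.elim a b
  | (k+1) => by
      rw [injective_iff_map_eq_one]
      intro x hx
      set y := iwSucc p k x with hy
      have hlift : SemidirectProduct.lift (baseHom p (rho p k)) (topHom p (Vt p k))
          (compat p (rho p k)) y = 1 := by
        have h2 : _root_.permCongrHom (vtSucc p k) (rho p (k+1) x)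
            = SemidirectProduct.lift (baseHom p (rho p k)) (topHom p (Vt p k))
              (compat p (rho p k)) y :=
          permCongr_symm_cancel (vtSucc p k) _
        rw [hx, map_one] at h2
        exact h2.symm
      -- lift y = baseHom (y.left) * topHom (y.right)
      have happ : ∀ (a : ZMod p) (b : Vt p k),
          (baseHom p (rho p k) y.left * topHom p (Vt p k) y.right) (a, b) = (a, b) := by
        intro a b
        rw [show (baseHom p (rho p k) y.left * topHom p (Vt p k) y.right)
            = SemidirectProduct.lift (baseHom p (rho p k)) (topHom p (Vt p k))
              (compat p (rho p k)) y from rfl, hlift]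
        rfl
      have hright : y.right = 1 := by
        obtain ⟨b⟩ := vtNonempty p k
        have h0 := happ 0 b
        rw [Equiv.Perm.mul_apply, topHom_apply, baseHom_apply] at h0
        have : (y.right.toAdd + 0 : ZMod p) = 0 := congrArg Prod.fst h0
        rw [add_zero] at this
        exact Multiplicative.toAdd.injective this
      have hleft : y.left = 1 := by
        funext a
        show y.left a = 1
        apply rho_injective p k
        rw [map_one]
        ext b
        have h0 := happ a b
        rw [Equiv.Perm.mul_apply, topHom_apply, hright] at h0
        simp only [toAdd_one, zero_add, baseHom_apply] at h0
        have := congrArg Prod.snd h0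
        simpa using this
      have : y = 1 := by ext <;> simp [hleft, hright]
      have := congrArg (iwSucc p k).symm (hy ▸ this)
      simpa using this

/-- equivalence between a semidirect product and the underlying product type -/
def sdpEquivProd {N G : Type*} [Group N] [Group G] (φ : G →* MulAut N) :
    (N ⋊[φ] G) ≃ N × G where
  toFun x := (x.left, x.right)
  invFun x := ⟨x.1, x.2⟩
  left_inv x := rfl
  right_inv x := rfl

def iwFintype (p : ℕ) [NeZero p] : ∀ k, Fintype (IW p k)
  | 0 => inferInstanceAs (Fintype PUnit)
  | (k+1) =>
      letI := iwFintype p k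
      Fintype.ofEquiv _ (((iwSucc p k).toEquiv.trans (sdpEquivProd _)).symm)

instance (p k : ℕ) [NeZero p] : Fintype (IW p k) := iwFintype p k

/-- the exponent: `eW p k = p^(k-1) + ⋯ + p + 1` -/
def eW (p : ℕ) : ℕ → ℕ
  | 0 => 0
  | (k+1) => p * eW p k + 1

lemma card_iw (p : ℕ) [NeZero p] : ∀ k, Fintype.card (IW p k) = p ^ eW p k
  | 0 => Fintype.card_punit
  | (k+1) => by
      have h : Fintype.card (IW p (k+1))
          = Fintype.card ((ZMod p → IW p k) × Multiplicative (ZMod p)) :=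
        Fintype.card_congr ((iwSucc p k).toEquiv.trans (sdpEquivProd _))
      rw [h, Fintype.card_prod, Fintype.card_fun, card_iw p k,
        Fintype.card_multiplicative, ZMod.card, ← pow_mul,
        show eW p (k+1) = p * eW p k + 1 from rfl, pow_succ, mul_comm p (eW p k)]

/-- the list of base-`p` digit positions of `n`, with multiplicity -/
def myCs (p : ℕ) (hp : 1 < p) : ℕ → List ℕ := fun n =>
  if h : n = 0 then []
  else List.replicate (n % p) 0 ++ (myCs p hp (n / p)).map (· + 1)
  termination_by n => n
  decreasing_by exact Nat.div_lt_self (Nat.pos_of_ne_zero h) hp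

lemma myCs_zero (p : ℕ) (hp : 1 < p) : myCs p hp 0 = [] := by rw [myCs]; simp

lemma myCs_pos (p : ℕ) (hp : 1 < p) {n : ℕ} (h : n ≠ 0) :
    myCs p hp n = List.replicate (n % p) 0 ++ (myCs p hp (n / p)).map (· + 1) := by
  rw [myCs]; simp [h]

lemma sum_map_mul_add (a : ℕ) (f : ℕ → ℕ) : ∀ l : List ℕ,
    (l.map fun c => a * f c + 1).sum = a * (l.map f).sum + l.length
  | [] => by simp
  | (x :: l) => by
      simp only [List.map_cons, List.sum_cons, sum_map_mul_add a f l, List.length_cons]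
      ring

lemma sum_map_mul (a : ℕ) (f : ℕ → ℕ) : ∀ l : List ℕ,
    (l.map fun c => a * f c).sum = a * (l.map f).sum
  | [] => by simp
  | (x :: l) => by
      simp only [List.map_cons, List.sum_cons, sum_map_mul a f l]
      ring

lemma sum_map_replicate_append (r : ℕ) (f : ℕ → ℕ) (l : List ℕ) :
    (((List.replicate r 0 ++ l).map f).sum) = r * f 0 + (l.map f).sum := by
  simp [List.map_append, List.sum_append, List.map_replicate, List.sum_replicate, mul_comm]

lemma myCs_sum_pow (p : ℕ) (hp : 1 < p) : ∀ n, ((myCs p hp n).map (p ^ ·)).sum = n := by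
  intro n
  induction n using Nat.strong_induction_on with
  | _ n ih =>
    rcases eq_or_ne n 0 with rfl | h
    · simp [myCs_zero]
    · rw [myCs_pos p hp h, sum_map_replicate_append, List.map_map]
      have he : ((p ^ ·) ∘ (· + 1)) = fun c : ℕ => p * p ^ c := by
        funext c
        simp [Function.comp, pow_succ, mul_comm]
      rw [he, sum_map_mul, ih _ (Nat.div_lt_self (Nat.pos_of_ne_zero h) hp)]
      have := Nat.div_add_mod n p
      simp only [pow_zero, mul_one]
      omega

lemma myCs_length (p : ℕ) (hp : 1 < p) : ∀ n, (myCs p hp n).length = (p.digits n).sum := by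
  intro n
  induction n using Nat.strong_induction_on with
  | _ n ih =>
    rcases eq_or_ne n 0 with rfl | h
    · simp [myCs_zero]
    · rw [myCs_pos p hp h, List.length_append, List.length_replicate, List.length_map,
        Nat.digits_def' hp (Nat.pos_of_ne_zero h), List.sum_cons,
        ih _ (Nat.div_lt_self (Nat.pos_of_ne_zero h) hp)]

lemma digitsum_le (p : ℕ) (hp : 1 < p) (n : ℕ) : (p.digits n).sum ≤ n := by
  induction n using Nat.strong_induction_on with
  | _ n ih =>
    rcases eq_or_ne n 0 with rfl | h
    · simp
    · rw [Nat.digits_def' hp (Nat.pos_of_ne_zero h), List.sum_cons]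
      calc n % p + (p.digits (n / p)).sum ≤ n % p + n / p :=
            Nat.add_le_add_left (ih _ (Nat.div_lt_self (Nat.pos_of_ne_zero h) hp)) _
        _ ≤ n := by
            have := Nat.div_add_mod n p
            have hle : n / p ≤ p * (n / p) := Nat.le_mul_of_pos_left _ (by omega)
            omega

lemma myCs_sum_eW (p : ℕ) (hp : p.Prime) :
    ∀ n, ((myCs p hp.one_lt n).map (eW p)).sum = padicValNat p n.factorial := by
  haveI := Fact.mk hp
  intro n
  induction n using Nat.strong_induction_on with
  | _ n ih =>
    rcases eq_or_ne n 0 with rfl | h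
    · simp [myCs_zero, Nat.factorial]
    · have hq : n / p < n := Nat.div_lt_self (Nat.pos_of_ne_zero h) hp.one_lt
      rw [myCs_pos p hp.one_lt h, sum_map_replicate_append, List.map_map]
      have he : (eW p) ∘ (· + 1) = fun c => p * eW p c + 1 := by
        funext c; simp [eW]
      rw [he, sum_map_mul_add, ih _ hq, myCs_length]
      -- now: 0 * eW p 0 + (p * ν(q!) + s_p(q)) = ν(n!)
      have hqn : padicValNat p n.factorial = padicValNat p (n / p).factorial + n / p := by
        conv_lhs => rw [← Nat.div_add_mod n p]
        rw [padicValNat_factorial_mul_add (n / p) (Nat.mod_lt n hp.pos),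
          padicValNat_factorial_mul]
      have hleg : (p - 1) * padicValNat p (n / p).factorial = n / p - (p.digits (n / p)).sum :=
        sub_one_mul_padicValNat_factorial (n / p)
      have hsle : (p.digits (n / p)).sum ≤ n / p := digitsum_le p hp.one_lt _
      have h2 : 2 ≤ p := hp.two_le
      have hsplit : p * padicValNat p (n / p).factorial
          = (p - 1) * padicValNat p (n / p).factorial + padicValNat p (n / p).factorial := by
        have h3 : p - 1 + 1 = p := by omega
        rw [← h3, add_mul, one_mul, h3]
      simp only [eW, Nat.mul_zero, Nat.zero_add]
      rw [hsplit, hleg, hqn]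
      omega

def piMapHom {ι : Type*} {M N : ι → Type*} [∀ i, Group (M i)] [∀ i, Group (N i)]
    (f : ∀ i, M i →* N i) : (∀ i, M i) →* (∀ i, N i) where
  toFun g i := f i (g i)
  map_one' := by funext i; simp
  map_mul' g h := by funext i; simp

lemma piMapHom_injective {ι : Type*} {M N : ι → Type*} [∀ i, Group (M i)] [∀ i, Group (N i)]
    (f : ∀ i, M i →* N i) (hf : ∀ i, Function.Injective (f i)) :
    Function.Injective (piMapHom f) :=
  fun a b h => funext fun i => hf i (congrFun h i)

/-- A Sylow `p`-subgroup of the symmetric group `S_n` is isomorphic to a direct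
product of iterated wreath products of copies of `ℤ/p`. -/
theorem stmt9 (n p : ℕ) (hp : p.Prime) (S : Sylow p (Equiv.Perm (Fin n))) :
    ∃ (m : ℕ) (c : Fin m → ℕ),
      Nonempty (S.toSubgroup ≃* ((i : Fin m) → IW p (c i))) := by
  haveI := Fact.mk hp
  haveI : NeZero p := ⟨hp.ne_zero⟩
  set L : List ℕ := myCs p hp.one_lt n with hL
  refine ⟨L.length, fun i => L.get i, ?_⟩
  set c : Fin L.length → ℕ := fun i => L.get i with hc
  -- the equivalence of index sets
  have hcard : Fintype.card ((i : Fin L.length) × Vt p (c i)) = n := by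
    rw [Fintype.card_sigma]
    calc ∑ i : Fin L.length, Fintype.card (Vt p (c i))
        = ∑ i : Fin L.length, p ^ (L.get i) := by
          refine Finset.sum_congr rfl fun i _ => ?_
          rw [card_vt]
      _ = (L.map (p ^ ·)).sum := Fin.sum_univ_fun_getElem L (p ^ ·)
      _ = n := myCs_sum_pow p hp.one_lt n
  let e : ((i : Fin L.length) × Vt p (c i)) ≃ Fin n := Fintype.equivFinOfCardEq hcard
  -- the big homomorphism
  let Φ : ((i : Fin L.length) → IW p (c i)) →* Equiv.Perm (Fin n) :=
    (_root_.permCongrHom e).comp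
      ((Equiv.Perm.sigmaCongrRightHom (fun i => Vt p (c i))).comp
        (piMapHom fun i => rho p (c i)))
  have hΦ : Function.Injective Φ :=
    (permCongrHom_injective e).comp
      (Equiv.Perm.sigmaCongrRightHom_injective.comp
        (piMapHom_injective _ fun i => rho_injective p (c i)))
  -- cardinality of the range
  have hcard2 : Nat.card Φ.range
      = p ^ ((Nat.card (Equiv.Perm (Fin n))).factorization p) := by
    rw [← Nat.card_congr (MonoidHom.ofInjective hΦ).toEquiv]
    rw [Nat.card_eq_fintype_card, Fintype.card_pi]
    calc (∏ i : Fin L.length, Fintype.card (IW p (c i)))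
        = ∏ i : Fin L.length, p ^ (eW p (L.get i)) := by
          refine Finset.prod_congr rfl fun i _ => ?_
          rw [card_iw]
      _ = p ^ (∑ i : Fin L.length, eW p (L.get i)) := by
          rw [Finset.prod_pow_eq_pow_sum]
      _ = p ^ ((L.map (eW p)).sum) := congrArg (p ^ ·) (Fin.sum_univ_fun_getElem L (eW p))
      _ = p ^ ((Nat.card (Equiv.Perm (Fin n))).factorization p) := by
          rw [myCs_sum_eW p hp n, Nat.card_eq_fintype_card, Fintype.card_perm,
            Fintype.card_fin, Nat.factorization_def _ hp]
  let P' : Sylow p (Equiv.Perm (Fin n)) := Sylow.ofCard Φ.range hcard2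
  exact ⟨(Sylow.equiv S P').trans (MonoidHom.ofInjective hΦ).symm⟩
end

section
/- Let p be a prime and G a group. In the wreath product W = ℤ/p ≀ G = ℤ/p ⋉ G^p, the base subgroup G^p is normal, and for any g ∈ S_p ≀ G (with ℤ/p ≤ S_p the subgroup generated by a p-cycle), the intersection W ∩ gWg⁻¹ is either W or G^p. -/
/-- In `S_p ≀ G = G^p ⋊ S_p`, let `W = ℤ/p ≀ G` be the preimage of the subgroup
generated by a `p`-cycle `c`, with base subgroup `B = G^p`. Then `B` is normal in `W`,
and for every `g ∈ S_p ≀ G`, the intersection `W ∩ gWg⁻¹` is either `W` or `B`. -/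
theorem stmt10 (p : ℕ) (hp : p.Prime) (G : Type*) [Group G]
    (c : Equiv.Perm (Fin p)) (hcyc : c.IsCycle) (hord : orderOf c = p) :
    ((SemidirectProduct.rightHom :
        ((Fin p → G) ⋊[permAut (Fin p) G] Equiv.Perm (Fin p)) →* Equiv.Perm (Fin p)).ker.subgroupOf
      (Subgroup.comap SemidirectProduct.rightHom (Subgroup.zpowers c))).Normal ∧
    ∀ g : (Fin p → G) ⋊[permAut (Fin p) G] Equiv.Perm (Fin p),
      (Subgroup.comap SemidirectProduct.rightHom (Subgroup.zpowers c)) ⊓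
          Subgroup.map (MulAut.conj g).toMonoidHom
            (Subgroup.comap SemidirectProduct.rightHom (Subgroup.zpowers c)) =
        Subgroup.comap SemidirectProduct.rightHom (Subgroup.zpowers c) ∨
      (Subgroup.comap SemidirectProduct.rightHom (Subgroup.zpowers c)) ⊓
          Subgroup.map (MulAut.conj g).toMonoidHom
            (Subgroup.comap SemidirectProduct.rightHom (Subgroup.zpowers c)) =
        (SemidirectProduct.rightHom :
          ((Fin p → G) ⋊[permAut (Fin p) G] Equiv.Perm (Fin p)) →* Equiv.Perm (Fin p)).ker := by
  set f := (SemidirectProduct.rightHom :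
      ((Fin p → G) ⋊[permAut (Fin p) G] Equiv.Perm (Fin p)) →* Equiv.Perm (Fin p)) with hf
  refine ⟨Subgroup.Normal.subgroupOf (MonoidHom.normal_ker f) _, fun g => ?_⟩
  set σ := f g with hσ
  have hmap : Subgroup.map (MulAut.conj g).toMonoidHom
      (Subgroup.comap f (Subgroup.zpowers c)) =
      Subgroup.comap f (Subgroup.map (MulAut.conj σ).toMonoidHom (Subgroup.zpowers c)) := by
    ext x
    rw [Subgroup.mem_map_equiv, Subgroup.mem_comap, Subgroup.mem_comap, Subgroup.mem_map_equiv]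
    simp only [MulAut.conj_symm_apply, map_mul, map_inv, hσ]
  have hinter : Subgroup.comap f (Subgroup.zpowers c) ⊓
      Subgroup.map (MulAut.conj g).toMonoidHom (Subgroup.comap f (Subgroup.zpowers c)) =
      Subgroup.comap f (Subgroup.zpowers c ⊓
        Subgroup.map (MulAut.conj σ).toMonoidHom (Subgroup.zpowers c)) := by
    rw [hmap, Subgroup.comap_inf]
  set K := Subgroup.zpowers c ⊓ Subgroup.map (MulAut.conj σ).toMonoidHom (Subgroup.zpowers c)
    with hK
  have hKle : K ≤ Subgroup.zpowers c := inf_le_left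
  have hcardc : Nat.card (Subgroup.zpowers c) = p := by
    rw [Nat.card_zpowers, hord]
  have hdvd : Nat.card K ∣ p := (Subgroup.card_dvd_of_le hKle).trans hcardc.dvd
  rcases (Nat.Prime.eq_one_or_self_of_dvd hp _ hdvd) with h1 | hp'
  · right
    rw [hinter]
    have : K = ⊥ := Subgroup.eq_bot_of_card_eq K h1
    rw [this]
    exact (MonoidHom.comap_bot f).symm ▸ rfl
  · left
    rw [hinter]
    have : K = Subgroup.zpowers c := by
      apply Subgroup.eq_of_le_of_card_ge hKle
      rw [hcardc, hp']
    rw [this]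
end

section
/- Let p be a prime, W = ℤ/p ≀ G the wreath product with base B = G^p, and let N: M^{⊗p} → (M^{⊗p})^{ℤ/p} be the norm map x ↦ Σ_{c ∈ ℤ/p} c·x for a vector space M over 𝔽_p with ℤ/p acting by cyclic permutation of tensor factors. Then there is an exact sequence 0 → N(M^{⊗p}) → (M^{⊗p})^{ℤ/p} → Φ M → 0, where Φ M denotes the image of the diagonal map x ↦ x ⊗ ⋯ ⊗ x spanned linearly; i.e., the invariants modulo norms are spanned by the classes of the diagonal tensors x^{⊗p}. -/
open scoped TensorProduct

/-- Invariants modulo norms for the cyclic permutation action of `ℤ/p` on `M^{⊗p}`: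
with `σ` the cyclic shift and `N = Σ_{j<p} σ^j` the norm map, the norms are invariant
and the invariants are spanned by the norms together with the diagonal tensors
`x ⊗ ⋯ ⊗ x` (exactness of `0 → N(M^{⊗p}) → (M^{⊗p})^{ℤ/p} → ΦM → 0`). -/
theorem stmt16 (p : ℕ) [Fact p.Prime] (M : Type*) [AddCommGroup M]
    [Module (ZMod p) M] :
    LinearMap.range
        (∑ j : Fin p,
          ((PiTensorProduct.reindex (ZMod p) (fun _ : Fin p => M)
                (finRotate p)).toLinearMap ^ (j : ℕ))) ≤
      LinearMap.ker
        ((PiTensorProduct.reindex (ZMod p) (fun _ : Fin p => M)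
            (finRotate p)).toLinearMap - LinearMap.id) ∧
    LinearMap.ker
        ((PiTensorProduct.reindex (ZMod p) (fun _ : Fin p => M)
            (finRotate p)).toLinearMap - LinearMap.id) =
      LinearMap.range
          (∑ j : Fin p,
            ((PiTensorProduct.reindex (ZMod p) (fun _ : Fin p => M)
                  (finRotate p)).toLinearMap ^ (j : ℕ))) ⊔
        Submodule.span (ZMod p)
          (Set.range fun m : M =>
            PiTensorProduct.tprod (ZMod p) (fun _ : Fin p => m)) := by
  classical
  have hp : p.Prime := Fact.out
  have hppos : 0 < p := hp.pos
  haveI : NeZero p := ⟨hp.ne_zero⟩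
  set R := ZMod p
  set T := PiTensorProduct R (fun _ : Fin p => M) with hT
  set σ : T →ₗ[R] T :=
    (PiTensorProduct.reindex (ZMod p) (fun _ : Fin p => M) (finRotate p)).toLinearMap with hσdef
  set N : T →ₗ[R] T := ∑ j : Fin p, σ ^ (j : ℕ) with hNdef
  set r : Equiv.Perm (Fin p) := finRotate p with hrdef
  set s : Equiv.Perm (Fin p) := r⁻¹ with hsdef
  -- basic facts about the rotation
  have hrapp : ∀ i : Fin p, r i = i + 1 := by
    rcases p with _ | n
    · exact absurd rfl (NeZero.ne 0)
    · exact fun i => finRotate_succ_apply i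
  open Fin.NatCast in
  have hrk : ∀ (k : ℕ) (i : Fin p), (r ^ k) i = i + (k : Fin p) := by
    intro k
    induction k with
    | zero => intro i; simp
    | succ k ih =>
      intro i
      rw [pow_succ', Equiv.Perm.mul_apply, hrapp, ih]
      push_cast
      rw [add_assoc]
  have hrp : r ^ p = 1 := by
    ext i
    simp [hrk, Fin.natCast_self]
  have hsp : s ^ p = 1 := by rw [hsdef, inv_pow, hrp, inv_one]
  have hsmod : ∀ a : ℕ, s ^ a = s ^ (a % p) := by
    intro a
    conv_lhs => rw [← Nat.div_add_mod a p, pow_add, pow_mul, hsp, one_pow, one_mul]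
  -- powers of σ
  have hpow : ∀ k : ℕ,
      σ ^ k = (PiTensorProduct.reindex (ZMod p) (fun _ : Fin p => M) (r ^ k)).toLinearMap := by
    intro k
    induction k with
    | zero =>
      have h1 : (r ^ 0) = Equiv.refl (Fin p) := rfl
      rw [pow_zero, h1, PiTensorProduct.reindex_refl]
      rfl
    | succ k ih =>
      apply LinearMap.ext; intro x
      rw [pow_succ, Module.End.mul_apply, ih]
      show (PiTensorProduct.reindex (ZMod p) (fun _ : Fin p => M) (r ^ k))
          ((PiTensorProduct.reindex (ZMod p) (fun _ : Fin p => M) r) x) =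
        (PiTensorProduct.reindex (ZMod p) (fun _ : Fin p => M) (r ^ (k + 1))) x
      refine (PiTensorProduct.reindex_reindex (R := ZMod p) (s := fun _ : Fin p => M)
        r (r ^ k) x).trans ?_
      have h2 : r.trans (r ^ k) = r ^ (k + 1) := by
        rw [← Equiv.Perm.mul_def, ← pow_succ]
      rw [h2]
  have hσp : σ ^ p = 1 := by
    rw [hpow, hrp]
    show (PiTensorProduct.reindex (ZMod p) (fun _ : Fin p => M) (Equiv.refl _)).toLinearMap = 1
    rw [PiTensorProduct.reindex_refl]
    rfl
  -- claim 1 via geometric sum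
  have hNsum : N = ∑ i ∈ Finset.range p, σ ^ i := by
    rw [hNdef, ← Fin.sum_univ_eq_sum_range (fun k => σ ^ k) p]
  have hτN : (σ - LinearMap.id) * N = 0 := by
    have : σ - LinearMap.id = σ - 1 := rfl
    rw [this, hNsum, mul_geom_sum, hσp, sub_self]
  have claim1 : LinearMap.range N ≤ LinearMap.ker (σ - LinearMap.id) := by
    rintro _ ⟨x, rfl⟩
    rw [LinearMap.mem_ker]
    have h := LinearMap.congr_fun hτN x
    rw [Module.End.mul_apply] at h
    simpa using h
  -- basis machinery
  set I := Module.Free.ChooseBasisIndex R M with hIdef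
  set e : Module.Basis I R M := Module.Free.chooseBasis R M with hedef
  set b : (Fin p → I) → T := fun f => PiTensorProduct.tprod R (fun i => e (f i)) with hbdef
  set φ : (Fin p → I) → (T →ₗ[R] R) := fun f =>
    PiTensorProduct.lift ((MultilinearMap.mkPiAlgebra R (Fin p) R).compLinearMap
      (fun i => e.coord (f i))) with hφdef
  have hφtp : ∀ (f : Fin p → I) (m : Fin p → M),
      φ f (PiTensorProduct.tprod R m) = ∏ i, e.repr (m i) (f i) := by
    intro f m
    rw [hφdef]
    rw [PiTensorProduct.lift.tprod, MultilinearMap.compLinearMap_apply,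
      MultilinearMap.mkPiAlgebra_apply]
    exact Finset.prod_congr rfl fun i _ => Module.Basis.coord_apply e (f i) (m i)
  have hφb : ∀ f g : Fin p → I, φ f (b g) = if f = g then 1 else 0 := by
    intro f g
    rw [hbdef]
    rw [hφtp]
    by_cases h : f = g
    · subst h
      rw [if_pos rfl]
      refine Finset.prod_eq_one fun i _ => ?_
      simp [Module.Basis.repr_self, Finsupp.single_apply]
    · obtain ⟨i, hi⟩ : ∃ i, f i ≠ g i := by
        by_contra hne
        push_neg at hne
        exact h (funext hne)
      rw [if_neg h]
      refine Finset.prod_eq_zero (Finset.mem_univ i) ?_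
      have hgi : ¬ g i = f i := fun hgi => hi hgi.symm
      simp [Module.Basis.repr_self, Finsupp.single_apply, hgi]
  -- the shift action on index functions
  set act : ℕ → (Fin p → I) → (Fin p → I) := fun k f i => f ((s ^ k) i) with hactdef
  have hact : ∀ (k l : ℕ) (f : Fin p → I), act k (act l f) = act (l + k) f := by
    intro k l f
    funext i
    show f ((s ^ l) ((s ^ k) i)) = f ((s ^ (l + k)) i)
    rw [pow_add, Equiv.Perm.mul_apply]
  have hact0 : ∀ f, act 0 f = f := by
    intro f; funext i; show f ((s ^ 0) i) = f i; rw [pow_zero]; rfl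
  have hactp : ∀ f, act p f = f := by
    intro f; funext i; show f ((s ^ p) i) = f i; rw [hsp]; rfl
  have hactmod : ∀ (a : ℕ) (f), act a f = act (a % p) f := by
    intro a f; funext i; show f ((s ^ a) i) = f ((s ^ (a % p)) i); rw [hsmod a]
  have hσb : ∀ g, σ (b g) = b (act 1 g) := by
    intro g
    show (PiTensorProduct.reindex (ZMod p) (fun _ : Fin p => M) r)
        (PiTensorProduct.tprod R (fun i => e (g i))) = _
    rw [PiTensorProduct.reindex_tprod]
    congr 1
  have hσbk : ∀ (k : ℕ) (g), (σ ^ k) (b g) = b (act k g) := by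
    intro k
    induction k with
    | zero => intro g; rw [pow_zero, Module.End.one_apply, hact0]
    | succ k ih =>
      intro g
      rw [pow_succ, Module.End.mul_apply, hσb, ih, hact, Nat.add_comm]
  have hφσ : ∀ f : Fin p → I, (φ f).comp σ = φ (fun i => f (r i)) := by
    intro f
    apply PiTensorProduct.ext
    apply MultilinearMap.ext
    intro m
    simp only [LinearMap.compMultilinearMap_apply, LinearMap.comp_apply]
    have h1 : σ (PiTensorProduct.tprod R m) = PiTensorProduct.tprod R (fun i => m (r.symm i)) :=
      PiTensorProduct.reindex_tprod r m
    rw [h1, hφtp, hφtp]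
    refine Fintype.prod_equiv s (fun i => e.repr (m (r.symm i)) (f i))
      (fun i => e.repr (m i) (f (r i))) fun i => ?_
    show e.repr (m (r.symm i)) (f i) = e.repr (m (s i)) (f (r (s i)))
    have h2 : r (s i) = i := Equiv.apply_symm_apply r i
    rw [h2]
    rfl
  -- representation over a finite index set
  have hrep : ∀ (F : Finset (Fin p → I)) (y : T), y ∈ Submodule.span R (b '' ↑F) →
      y = ∑ f ∈ F, φ f y • b f := by
    intro F y hy
    refine Submodule.span_induction ?_ ?_ ?_ ?_ hy
    · rintro _ ⟨g, hg, rfl⟩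
      rw [Finset.mem_coe] at hg
      refine Eq.symm ?_
      rw [Finset.sum_congr rfl (fun f _ => by rw [hφb f g, ite_smul, one_smul, zero_smul]),
        Finset.sum_ite_eq' F g b, if_pos hg]
    · simp
    · intro x y _ _ ihx ihy
      simp only [map_add, add_smul, Finset.sum_add_distrib]
      rw [← ihx, ← ihy]
    · intro a x _ ihx
      calc a • x = a • ∑ f ∈ F, φ f x • b f := by rw [← ihx]
        _ = ∑ f ∈ F, φ f (a • x) • b f := by
            rw [Finset.smul_sum]
            refine Finset.sum_congr rfl fun f _ => ?_
            rw [map_smul, smul_assoc]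
  -- every element lives in the span of finitely many basis tensors
  have hfin : ∀ y : T, ∃ F : Finset (Fin p → I), y ∈ Submodule.span R (b '' ↑F) := by
    intro y
    refine PiTensorProduct.induction_on y ?_ ?_
    · intro c m
      refine ⟨Fintype.piFinset (fun i => (e.repr (m i)).support), ?_⟩
      refine Submodule.smul_mem _ c ?_
      have hm : ∀ i, m i = ∑ j ∈ (e.repr (m i)).support, e.repr (m i) j • e j := by
        intro i
        have h2 := e.linearCombination_repr (m i)
        rw [Finsupp.linearCombination_apply, Finsupp.sum] at h2
        exact h2.symm
      have h3 : PiTensorProduct.tprod R m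
          = ∑ f ∈ Fintype.piFinset (fun i => (e.repr (m i)).support),
            (∏ i, e.repr (m i) (f i)) • b f := by
        conv_lhs => rw [show m = fun i => ∑ j ∈ (e.repr (m i)).support, e.repr (m i) j • e j from
          funext hm]
        rw [MultilinearMap.map_sum_finset (PiTensorProduct.tprod R)
          (fun i j => e.repr (m i) j • e j)]
        refine Finset.sum_congr rfl fun f _ => ?_
        rw [← MultilinearMap.map_smul_univ]
      rw [h3]
      exact Submodule.sum_mem _ fun f hf => Submodule.smul_mem _ _
        (Submodule.subset_span ⟨f, by simpa using hf, rfl⟩)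
    · rintro x y ⟨F₁, h₁⟩ ⟨F₂, h₂⟩
      refine ⟨F₁ ∪ F₂, Submodule.add_mem _ ?_ ?_⟩
      · exact Submodule.span_mono (Set.image_mono (by simp [Finset.coe_subset])) h₁
      · exact Submodule.span_mono (Set.image_mono (by simp [Finset.coe_subset])) h₂
  -- target submodule
  set D : Submodule R T := Submodule.span R
    (Set.range fun m : M => PiTensorProduct.tprod (ZMod p) (fun _ : Fin p => m)) with hDdef
  set S : Submodule R T := LinearMap.range N ⊔ D with hSdef
  have hbD : ∀ f : Fin p → I, (∀ i, f i = f 0) → b f ∈ D := by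
    intro f hf
    have h1 : b f = PiTensorProduct.tprod (ZMod p) (fun _ : Fin p => e (f 0)) := by
      show PiTensorProduct.tprod R (fun i => e (f i)) = _
      congr 1
      funext i
      rw [hf i]
    rw [h1]
    exact Submodule.subset_span ⟨e (f 0), rfl⟩
  have hconst_of_fix : ∀ f : Fin p → I, act 1 f = f → ∀ i : Fin p, f i = f 0 := by
    intro f hf i
    have hfs : ∀ j : Fin p, f (s j) = f j := by
      intro j
      have h := congrFun hf j
      calc f (s j) = f ((s ^ 1) j) := by rw [pow_one]
        _ = f j := h
    have hfr : ∀ j : Fin p, f (r j) = f j := by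
      intro j
      have h := hfs (r j)
      have h2 : s (r j) = j := Equiv.symm_apply_apply r j
      rw [h2] at h
      exact h.symm
    have hk : ∀ k : ℕ, f ((r ^ k) 0) = f 0 := by
      intro k
      induction k with
      | zero => rw [pow_zero]; rfl
      | succ k ihk => rw [pow_succ', Equiv.Perm.mul_apply, hfr, ihk]
    have h3 : (r ^ (i : ℕ)) 0 = i := by
      rw [hrk, zero_add, Fin.cast_val_eq_self]
    rw [← h3, hk]
  have hiter : ∀ (f : Fin p → I) (d : ℕ), act d f = f → ∀ j : ℕ, act (d * j) f = f := by
    intro f d hd j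
    induction j with
    | zero => rw [Nat.mul_zero, hact0]
    | succ j ihj =>
      have h1 : d * (j + 1) = d * j + d := by ring
      rw [h1, ← hact d (d * j) f, ihj, hd]
  have hfix_of_fix_pow : ∀ (f : Fin p → I) (d : ℕ), 0 < d → d < p → act d f = f →
      act 1 f = f := by
    intro f d hd0 hdp hfix
    have hcop : Nat.Coprime d p :=
      ((hp.coprime_iff_not_dvd).mpr (Nat.not_dvd_of_pos_of_lt hd0 hdp)).symm
    obtain ⟨u, -, hu⟩ := Nat.exists_mul_mod_eq_one_of_coprime hcop hp.one_lt
    have h1 : act (d * u) f = f := hiter f d hfix u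
    rw [hactmod, hu] at h1
    exact h1
  -- the main induction
  have main : ∀ (nn : ℕ) (F : Finset (Fin p → I)), F.card ≤ nn →
      (∀ g ∈ F, act 1 g ∈ F) → ∀ x : T, σ x = x →
      x ∈ Submodule.span R (b '' ↑F) → x ∈ S := by
    intro nn
    induction nn with
    | zero =>
      intro F hcard _ x _ hmem
      have hF : F = ∅ := Finset.card_eq_zero.mp (Nat.le_zero.mp hcard)
      subst hF
      simp only [Finset.coe_empty, Set.image_empty, Submodule.span_empty,
        Submodule.mem_bot] at hmem
      rw [hmem]
      exact Submodule.zero_mem S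
    | succ nn ih =>
      intro F hcard hclosed x hx hmem
      rcases Finset.eq_empty_or_nonempty F with rfl | ⟨f₀, hf₀⟩
      · simp only [Finset.coe_empty, Set.image_empty, Submodule.span_empty,
          Submodule.mem_bot] at hmem
        rw [hmem]
        exact Submodule.zero_mem S
      have hxrep := hrep F x hmem
      have hcr : ∀ f : Fin p → I, φ (fun i => f (r i)) x = φ f x := by
        intro f
        have h1 := LinearMap.congr_fun (hφσ f) x
        rw [LinearMap.comp_apply, hx] at h1
        exact h1.symm
      have hcs : ∀ f : Fin p → I, φ (act 1 f) x = φ f x := by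
        intro f
        have h1 := hcr (act 1 f)
        have h2 : (fun i => act 1 f (r i)) = f := by
          funext i
          show f ((s ^ 1) (r i)) = f i
          rw [pow_one]
          have h3 : s (r i) = i := Equiv.symm_apply_apply r i
          rw [h3]
        rw [h2] at h1
        exact h1.symm
      have hck : ∀ (k : ℕ) (f : Fin p → I), φ (act k f) x = φ f x := by
        intro k
        induction k with
        | zero => intro f; rw [hact0]
        | succ k ihk =>
          intro f
          have h1 : act (k + 1) f = act k (act 1 f) := by
            rw [hact k 1 f, Nat.add_comm]
          rw [h1, ihk (act 1 f), hcs f]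
      have horbF : ∀ k : ℕ, act k f₀ ∈ F := by
        intro k
        induction k with
        | zero => rw [hact0]; exact hf₀
        | succ k ihk =>
          have h1 : act 1 (act k f₀) = act (k + 1) f₀ := hact 1 k f₀
          rw [← h1]
          exact hclosed _ ihk
      by_cases hfix : act 1 f₀ = f₀
      · -- CASE A : f₀ is a fixed point, b f₀ is a diagonal tensor
        have hbf₀D : b f₀ ∈ D := hbD f₀ (hconst_of_fix f₀ hfix)
        set y : T := φ f₀ x • b f₀ with hydef
        have hyS : y ∈ S := Submodule.mem_sup_right (Submodule.smul_mem _ _ hbf₀D)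
        have hσy : σ y = y := by
          rw [hydef, map_smul, hσb, hfix]
        have hfixk : ∀ k : ℕ, act k f₀ = f₀ := by
          intro k
          induction k with
          | zero => exact hact0 f₀
          | succ k ihk => rw [← hact 1 k f₀, ihk, hfix]
        have herase_closed : ∀ g ∈ F.erase f₀, act 1 g ∈ F.erase f₀ := by
          intro g hg
          rw [Finset.mem_erase] at hg ⊢
          refine ⟨?_, hclosed g hg.2⟩
          intro hcontra
          apply hg.1
          have h1 : act (p - 1) (act 1 g) = g := by
            rw [hact (p - 1) 1 g, show 1 + (p - 1) = p from by omega, hactp]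
          rw [← h1, hcontra, hfixk]
        have hsub : x - y = ∑ f ∈ F.erase f₀, φ f x • b f := by
          have h1 := Finset.add_sum_erase F (fun f => φ f x • b f) hf₀
          have h2 : x - y = (∑ f ∈ F, φ f x • b f) - y := by
            conv_lhs => rw [hxrep]
          rw [h2, ← h1, hydef]
          exact add_sub_cancel_left _ _
        have hmem2 : x - y ∈ Submodule.span R (b '' ↑(F.erase f₀)) := by
          rw [hsub]
          exact Submodule.sum_mem _ fun f hf => Submodule.smul_mem _ _
            (Submodule.subset_span ⟨f, Finset.mem_coe.mpr hf, rfl⟩)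
        have hcard2 : (F.erase f₀).card ≤ nn := by
          rw [Finset.card_erase_of_mem hf₀]
          omega
        have hinv2 : σ (x - y) = x - y := by rw [map_sub, hx, hσy]
        have hxyS := ih (F.erase f₀) hcard2 herase_closed (x - y) hinv2 hmem2
        have hfinal := Submodule.add_mem S hxyS hyS
        simpa using hfinal
      · -- CASE B : the orbit of f₀ is free, the orbit sum is a norm
        have hinj : ∀ k ∈ Finset.range p, ∀ l ∈ Finset.range p,
            act k f₀ = act l f₀ → k = l := by
          intro k hk l hl hkl
          rw [Finset.mem_range] at hk hl
          by_contra hne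
          have haux : ∀ a c : ℕ, a < c → c < p → act a f₀ = act c f₀ → False := by
            intro a c hac hcp heq
            have h1 : act (p - a) (act a f₀) = act (p - a) (act c f₀) := by rw [heq]
            rw [hact, hact] at h1
            rw [show a + (p - a) = p from by omega, hactp] at h1
            rw [show c + (p - a) = (c - a) + p from by omega] at h1
            rw [← hact p (c - a) f₀, hactp] at h1
            exact hfix (hfix_of_fix_pow f₀ (c - a) (by omega) (by omega) h1.symm)
          rcases Nat.lt_or_ge k l with h | h
          · exact haux k l h hl hkl
          · exact haux l k (by omega) hk hkl.symm
        set O : Finset (Fin p → I) := Finset.image (fun k => act k f₀) (Finset.range p)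
          with hOdef
        have hOF : O ⊆ F := by
          intro g hg
          rw [hOdef, Finset.mem_image] at hg
          obtain ⟨k, _, rfl⟩ := hg
          exact horbF k
        have hf₀O : f₀ ∈ O := by
          rw [hOdef, Finset.mem_image]
          exact ⟨0, Finset.mem_range.mpr hp.pos, hact0 f₀⟩
        set y : T := φ f₀ x • ∑ k ∈ Finset.range p, b (act k f₀) with hydef
        have hyN : y ∈ LinearMap.range N := by
          refine ⟨φ f₀ x • b f₀, ?_⟩
          rw [map_smul]
          rw [hydef]
          congr 1
          calc N (b f₀) = ∑ j : Fin p, (σ ^ (j : ℕ)) (b f₀) := by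
                rw [hNdef, LinearMap.sum_apply]
            _ = ∑ j : Fin p, b (act (j : ℕ) f₀) :=
                Finset.sum_congr rfl fun j _ => hσbk _ _
            _ = ∑ k ∈ Finset.range p, b (act k f₀) :=
                Fin.sum_univ_eq_sum_range (fun k => b (act k f₀)) p
        have hyS : y ∈ S := Submodule.mem_sup_left hyN
        have hσy : σ y = y := by
          have h1 := claim1 hyN
          rw [LinearMap.mem_ker, LinearMap.sub_apply, LinearMap.id_apply, sub_eq_zero] at h1
          exact h1
        have hsumO : ∑ g ∈ O, φ g x • b g = y := by
          rw [hOdef, Finset.sum_image (fun k hk l hl h => hinj k hk l hl h)]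
          rw [hydef, Finset.smul_sum]
          exact Finset.sum_congr rfl fun k _ => by rw [hck k f₀]
        have hsub : x - y = ∑ f ∈ F \ O, φ f x • b f := by
          have h1 := Finset.sum_sdiff (f := fun f => φ f x • b f) hOF
          have h2 : x - y = (∑ f ∈ F, φ f x • b f) - y := by
            conv_lhs => rw [hxrep]
          rw [h2, ← h1, hsumO]
          exact add_sub_cancel_right _ _
        have hdiff_closed : ∀ g ∈ F \ O, act 1 g ∈ F \ O := by
          intro g hg
          rw [Finset.mem_sdiff] at hg ⊢
          refine ⟨hclosed g hg.1, ?_⟩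
          intro hcontra
          apply hg.2
          rw [hOdef, Finset.mem_image] at hcontra
          obtain ⟨k, hk, hkeq⟩ := hcontra
          rw [Finset.mem_range] at hk
          have h1 : act (p - 1) (act 1 g) = g := by
            rw [hact (p - 1) 1 g, show 1 + (p - 1) = p from by omega, hactp]
          have h2 : g = act ((k + (p - 1)) % p) f₀ := by
            rw [← h1, ← hkeq, hact (p - 1) k f₀, hactmod]
          rw [hOdef, Finset.mem_image]
          exact ⟨(k + (p - 1)) % p, Finset.mem_range.mpr (Nat.mod_lt _ hp.pos), h2.symm⟩
        have hsubF : F \ O ⊆ F.erase f₀ := by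
          intro g hg
          rw [Finset.mem_sdiff] at hg
          rw [Finset.mem_erase]
          exact ⟨fun h => hg.2 (h ▸ hf₀O), hg.1⟩
        have hcard2 : (F \ O).card ≤ nn := by
          have h3 := Finset.card_le_card hsubF
          rw [Finset.card_erase_of_mem hf₀] at h3
          omega
        have hmem2 : x - y ∈ Submodule.span R (b '' ↑(F \ O)) := by
          rw [hsub]
          exact Submodule.sum_mem _ fun f hf => Submodule.smul_mem _ _
            (Submodule.subset_span ⟨f, Finset.mem_coe.mpr hf, rfl⟩)
        have hinv2 : σ (x - y) = x - y := by rw [map_sub, hx, hσy]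
        have hxyS := ih (F \ O) hcard2 hdiff_closed (x - y) hinv2 hmem2
        have hfinal := Submodule.add_mem S hxyS hyS
        simpa using hfinal
  -- final assembly
  refine ⟨claim1, le_antisymm ?_ ?_⟩
  · intro x hx
    rw [LinearMap.mem_ker, LinearMap.sub_apply, LinearMap.id_apply, sub_eq_zero] at hx
    obtain ⟨F₀, hF₀⟩ := hfin x
    set F' : Finset (Fin p → I) :=
      Finset.image (fun q : ℕ × (Fin p → I) => act q.1 q.2) ((Finset.range p) ×ˢ F₀)
      with hF'def
    have hF₀F' : F₀ ⊆ F' := by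
      intro f hf
      rw [hF'def, Finset.mem_image]
      exact ⟨(0, f), Finset.mem_product.mpr ⟨Finset.mem_range.mpr hp.pos, hf⟩, hact0 f⟩
    have hF'closed : ∀ g ∈ F', act 1 g ∈ F' := by
      intro g hg
      rw [hF'def, Finset.mem_image] at hg ⊢
      obtain ⟨⟨k, f⟩, hkf, rfl⟩ := hg
      rw [Finset.mem_product, Finset.mem_range] at hkf
      refine ⟨((k + 1) % p, f), Finset.mem_product.mpr
        ⟨Finset.mem_range.mpr (Nat.mod_lt _ hp.pos), hkf.2⟩, ?_⟩
      show act ((k + 1) % p) f = act 1 (act k f)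
      rw [hact 1 k f, ← hactmod]
    exact main F'.card F' le_rfl hF'closed x hx
      (Submodule.span_mono (Set.image_mono (Finset.coe_subset.mpr hF₀F')) hF₀)
  · refine sup_le claim1 (Submodule.span_le.mpr ?_)
    rintro _ ⟨m, rfl⟩
    rw [SetLike.mem_coe, LinearMap.mem_ker, LinearMap.sub_apply, LinearMap.id_apply,
      sub_eq_zero]
    show (PiTensorProduct.reindex (ZMod p) (fun _ : Fin p => M) r)
      (PiTensorProduct.tprod R fun _ : Fin p => m) = _
    rw [PiTensorProduct.reindex_tprod]
end
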